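/- For all words μ, ν with |μ| = |ν| and every element a ∈ A, one has φ(S_μ a (S_ν)⋆) = n^{−|μ|} φ(a) if μ = ν, and φ(S_μ a (S_ν)⋆) = 0 if μ ≠ ν. -/

import Mathlib

open scoped ComplexOrder

noncomputable section

/-- The product `S_{μ₁} ⋯ S_{μ_p}` along a word `μ` (with `S_μ = 1` for the empty word). -/
def wordProd {A : Type*} [Monoid A] {n : ℕ} (S : Fin n → A) (μ : List (Fin n)) : A :=
  (μ.map S).prod

/-- `B_{r,s} = Span { S_μ S_ν⋆ : |μ| = r, |ν| = s }`;  `F_k = B_{k,k}`. -/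
def Bspan {A : Type*} [Ring A] [Algebra ℂ A] [StarRing A] {n : ℕ}
    (S : Fin n → A) (r s : ℕ) : Submodule ℂ A :=
  Submodule.span ℂ
    {a | ∃ μ ν : List (Fin n), μ.length = r ∧ ν.length = s ∧
        a = wordProd S μ * star (wordProd S ν)}

/-- `W_0 = ℂ·1` and, for `k ≥ 1`,
`W_k = {x ∈ F_k : φ(y⋆ x) = 0 for all y ∈ F_{k-1}}`. -/
def Wsub {A : Type*} [NormedRing A] [NormedAlgebra ℂ A] [StarRing A] {n : ℕ}
    (φ : A →L[ℂ] ℂ) (S : Fin n → A) : ℕ → Submodule ℂ A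
  | 0 => Submodule.span ℂ {(1 : A)}
  | (k + 1) =>
      Bspan S (k + 1) (k + 1) ⊓
        ⨅ y ∈ Bspan S k k,
          LinearMap.ker ((φ : A →ₗ[ℂ] ℂ) ∘ₗ LinearMap.mulLeft ℂ (star y))

/-- `V¹_{k,r} = Span { S_μ x : |μ| = r, x ∈ W_k }`. -/
def V1 {A : Type*} [NormedRing A] [NormedAlgebra ℂ A] [StarRing A] {n : ℕ}
    (φ : A →L[ℂ] ℂ) (S : Fin n → A) (k r : ℕ) : Submodule ℂ A :=
  Submodule.span ℂ
    {a | ∃ μ : List (Fin n), ∃ x : A, μ.length = r ∧ x ∈ Wsub φ S k ∧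
        a = wordProd S μ * x}

/-- `V²_{k,r} = Span { x S_γ⋆ : |γ| = r, x ∈ W_k }`. -/
def V2 {A : Type*} [NormedRing A] [NormedAlgebra ℂ A] [StarRing A] {n : ℕ}
    (φ : A →L[ℂ] ℂ) (S : Fin n → A) (k r : ℕ) : Submodule ℂ A :=
  Submodule.span ℂ
    {a | ∃ γ : List (Fin n), ∃ x : A, γ.length = r ∧ x ∈ Wsub φ S k ∧
        a = x * star (wordProd S γ)}

/-- For a Cuntz family `S` and the KMS_{log n} functional `φ`,
for words `μ, ν` with `|μ| = |ν|` and any `a ∈ A`: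
`φ(S_μ a S_ν⋆) = n^{-|μ|} φ(a)` if `μ = ν`, and `= 0` if `μ ≠ ν`. -/
theorem kms_sandwich
    {A : Type*} [NormedRing A] [StarRing A] [CStarRing A]
    [NormedAlgebra ℂ A] [StarModule ℂ A] [CompleteSpace A]
    {n : ℕ} (hn : 2 ≤ n) (S : Fin n → A)
    (hS1 : ∀ i, star (S i) * S i = 1)
    (hS2 : ∑ j, S j * star (S j) = 1)
    (hdense :
      (Submodule.span ℂ
        {a | ∃ μ ν : List (Fin n),
            a = wordProd S μ * star (wordProd S ν)}).topologicalClosure = ⊤)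
    (φ : A →L[ℂ] ℂ)
    (hφ : ∀ μ ν : List (Fin n),
      φ (wordProd S μ * star (wordProd S ν)) =
        if μ = ν then ((n : ℂ) ^ μ.length)⁻¹ else 0)
    (μ ν : List (Fin n)) (hlen : μ.length = ν.length) (a : A) :
    φ (wordProd S μ * a * star (wordProd S ν)) =
      if μ = ν then ((n : ℂ) ^ μ.length)⁻¹ * φ a else 0 := by
  classical
  set wμ := wordProd S μ
  set wν := wordProd S ν
  set c : ℂ := if μ = ν then ((n : ℂ) ^ μ.length)⁻¹ else 0 with hc
  have happ : ∀ α β : List (Fin n),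
      wordProd S (α ++ β) = wordProd S α * wordProd S β := by
    intro α β
    simp [wordProd, List.map_append, List.prod_append]
  set g : A →L[ℂ] ℂ :=
    φ.comp (ContinuousLinearMap.mulLeftRight ℂ A wμ (star wν)) - c • φ with hg
  have hker : ∀ x, g x = 0 := by
    have hspan : Submodule.span ℂ
        {a | ∃ μ' ν' : List (Fin n),
            a = wordProd S μ' * star (wordProd S ν')} ≤ LinearMap.ker (g : A →ₗ[ℂ] ℂ) := by
      rw [Submodule.span_le]
      rintro x ⟨α, β, rfl⟩
      have key : wμ * (wordProd S α * star (wordProd S β)) * star wν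
          = wordProd S (μ ++ α) * star (wordProd S (ν ++ β)) := by
        rw [happ, happ, star_mul]
        simp [mul_assoc]
        rfl
      have : g (wordProd S α * star (wordProd S β)) = 0 := by
        simp only [hg, ContinuousLinearMap.sub_apply, ContinuousLinearMap.comp_apply,
          ContinuousLinearMap.mulLeftRight_apply, ContinuousLinearMap.smul_apply,
          smul_eq_mul, key, hφ, sub_eq_zero, hc]
        by_cases hμν : μ = ν
        · subst hμν
          by_cases hαβ : α = β
          · subst hαβ
            simp [List.length_append, pow_add, mul_inv, mul_comm]
          · rw [if_neg (by simpa using hαβ), if_neg hαβ, if_pos rfl, mul_zero]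
        · have hne : μ ++ α ≠ ν ++ β := by
            intro h
            exact hμν (List.append_inj_left h hlen)
          rw [if_neg hne, if_neg hμν, zero_mul]
      exact this
    intro x
    have hx : x ∈ LinearMap.ker (g : A →ₗ[ℂ] ℂ) := by
      have hcl : (Submodule.span ℂ
          {a | ∃ μ' ν' : List (Fin n),
              a = wordProd S μ' * star (wordProd S ν')}).topologicalClosure ≤
          LinearMap.ker (g : A →ₗ[ℂ] ℂ) :=
        Submodule.topologicalClosure_minimal _ hspan (ContinuousLinearMap.isClosed_ker g)
      rw [hdense] at hcl
      exact hcl trivial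
    exact hx
  have := hker a
  simp only [hg, ContinuousLinearMap.sub_apply, ContinuousLinearMap.comp_apply,
    ContinuousLinearMap.mulLeftRight_apply, ContinuousLinearMap.smul_apply,
    smul_eq_mul, sub_eq_zero] at this
  rw [this, hc]
  by_cases hμν : μ = ν
  · simp [hμν]
  · simp [hμν]
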